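/- Let Z, Y ∈ ℝ^{n×p}, and form the block matrices U = [Z, Y] ∈ ℝ^{n×2p} and V = [Y, −Z] ∈ ℝ^{n×2p}, so that A := U Vᵀ = Z Yᵀ − Y Zᵀ. If I_{2p} − (1/2) Vᵀ U is invertible, then I_n − (1/2) A is invertible and (I_n − (1/2)A)⁻¹ (I_n + (1/2)A) Y = Y + U (I_{2p} − (1/2) Vᵀ U)⁻¹ Vᵀ Y. -/

import Mathlib

open Matrix

/-- Sherman–Morrison–Woodbury form of the Cayley update. With
`U = [Z, Y]`, `V = [Y, -Z]`, so `U Vᵀ = Z Yᵀ - Y Zᵀ =: A`, if `I_{2p} - ½ Vᵀ U` is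
invertible then `I_n - ½ A` is invertible and
`(I - ½A)⁻¹ (I + ½A) Y = Y + U (I_{2p} - ½ Vᵀ U)⁻¹ Vᵀ Y`. -/
theorem cayley_smw (n p : ℕ) (Z Y : Matrix (Fin n) (Fin p) ℝ)
    (U V : Matrix (Fin n) (Fin p ⊕ Fin p) ℝ)
    (hU : U = Matrix.fromCols Z Y) (hV : V = Matrix.fromCols Y (-Z))
    (hInv : IsUnit ((1 : Matrix (Fin p ⊕ Fin p) (Fin p ⊕ Fin p) ℝ)
      - (1/2 : ℝ) • (Vᵀ * U))) :
    U * Vᵀ = Z * Yᵀ - Y * Zᵀ ∧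
    IsUnit ((1 : Matrix (Fin n) (Fin n) ℝ) - (1/2 : ℝ) • (U * Vᵀ)) ∧
    ((1 : Matrix (Fin n) (Fin n) ℝ) - (1/2 : ℝ) • (U * Vᵀ))⁻¹
        * (((1 : Matrix (Fin n) (Fin n) ℝ) + (1/2 : ℝ) • (U * Vᵀ)) * Y)
      = Y + U * (((1 : Matrix (Fin p ⊕ Fin p) (Fin p ⊕ Fin p) ℝ)
          - (1/2 : ℝ) • (Vᵀ * U))⁻¹ * (Vᵀ * Y)) := by
  have h1 : U * Vᵀ = Z * Yᵀ - Y * Zᵀ := by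
    subst hU hV
    rw [transpose_fromCols, fromCols_mul_fromRows, transpose_neg, Matrix.mul_neg,
      sub_eq_add_neg]
  set S : Matrix (Fin p ⊕ Fin p) (Fin p ⊕ Fin p) ℝ :=
    (1 : Matrix (Fin p ⊕ Fin p) (Fin p ⊕ Fin p) ℝ) - (1/2 : ℝ) • (Vᵀ * U) with hSdef
  set M : Matrix (Fin n) (Fin n) ℝ :=
    (1 : Matrix (Fin n) (Fin n) ℝ) - (1/2 : ℝ) • (U * Vᵀ) with hMdef
  have hSS : S * S⁻¹ = 1 := mul_nonsing_inv S ((isUnit_iff_isUnit_det S).mp hInv)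
  -- key: M * B = 1 where B = 1 + (1/2) • (U * (S⁻¹ * Vᵀ))
  have hVU : Vᵀ * U = (2:ℝ) • (1 : Matrix (Fin p ⊕ Fin p) (Fin p ⊕ Fin p) ℝ) - (2:ℝ) • S := by
    rw [hSdef]; rw [smul_sub, smul_smul]; norm_num
  have hMB : M * ((1 : Matrix (Fin n) (Fin n) ℝ) + (1/2 : ℝ) • (U * (S⁻¹ * Vᵀ))) = 1 := by
    have expand : (U * Vᵀ) * (U * (S⁻¹ * Vᵀ)) = U * ((Vᵀ * U) * (S⁻¹ * Vᵀ)) := by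
      simp only [Matrix.mul_assoc]
    have key : (Vᵀ * U) * (S⁻¹ * Vᵀ) = (2:ℝ) • (S⁻¹ * Vᵀ) - (2:ℝ) • Vᵀ := by
      rw [hVU, Matrix.sub_mul, Matrix.smul_mul, Matrix.smul_mul, Matrix.one_mul,
        ← Matrix.mul_assoc, hSS, Matrix.one_mul]
    rw [hMdef, Matrix.sub_mul, Matrix.one_mul, Matrix.mul_add, Matrix.mul_one,
      Matrix.mul_smul, Matrix.smul_mul, expand, key]
    simp only [Matrix.mul_sub, Matrix.mul_smul, smul_sub, smul_smul]
    norm_num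
  have hMunit : IsUnit M :=
    ⟨⟨M, _, hMB, mul_eq_one_comm.mp hMB⟩, rfl⟩
  refine ⟨h1, hMunit, ?_⟩
  have hMinv : M⁻¹ = (1 : Matrix (Fin n) (Fin n) ℝ) + (1/2 : ℝ) • (U * (S⁻¹ * Vᵀ)) :=
    inv_eq_right_inv hMB
  have h2M : (1 : Matrix (Fin n) (Fin n) ℝ) + (1/2 : ℝ) • (U * Vᵀ)
      = (2:ℝ) • (1 : Matrix (Fin n) (Fin n) ℝ) - M := by
    rw [hMdef, two_smul]; abel
  rw [h2M, Matrix.sub_mul, Matrix.mul_sub, ← Matrix.mul_assoc M⁻¹ M Y,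
    nonsing_inv_mul M ((isUnit_iff_isUnit_det M).mp hMunit), Matrix.one_mul,
    Matrix.smul_mul, Matrix.one_mul, Matrix.mul_smul, hMinv, Matrix.add_mul,
    Matrix.one_mul, Matrix.smul_mul]
  simp only [smul_add, smul_smul, Matrix.mul_assoc]
  norm_num
  rw [two_smul]
  abel
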